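/- Let τ > 0, ε ∈ (0,τ), let A : [0,τ) → ℝ^{n×n} be continuous, and let P : [τ−ε,τ) → ℝ^{n×n} be continuously differentiable with P(t) symmetric and positive definite for each t, satisfying Ṗ(t) + A(t)ᵀP(t) + P(t)A(t) negative semidefinite for all t ∈ [τ−ε,τ) and λ_min(P(t)) → +∞ as t → τ⁻. Then every differentiable x : [0,τ) → ℝⁿ with x'(t) = A(t)x(t) satisfies ‖x(t)‖ → 0 as t → τ⁻; i.e., the system ẋ = A(t)x is prescribed-time attractive at τ. -/

import Mathlib

open Matrix Filter Topology

/-- Eigenvalues of a real matrix that is Hermitian (= symmetric); junk value `0` otherwise. -/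
noncomputable def eigs {n : ℕ} (M : Matrix (Fin n) (Fin n) ℝ) : Fin n → ℝ :=
  if h : M.IsHermitian then h.eigenvalues else 0

/-- Largest eigenvalue of a real symmetric matrix. -/
noncomputable def lamMax {n : ℕ} (M : Matrix (Fin n) (Fin n) ℝ) : ℝ := ⨆ i, eigs M i

/-- Smallest eigenvalue of a real symmetric matrix. -/
noncomputable def lamMin {n : ℕ} (M : Matrix (Fin n) (Fin n) ℝ) : ℝ := ⨅ i, eigs M i

/-- Logarithmic norm w.r.t. the Euclidean norm: `μ(M) = λ_max((M + Mᵀ)/2)`. -/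
noncomputable def logNorm {n : ℕ} (M : Matrix (Fin n) (Fin n) ℝ) : ℝ :=
  lamMax ((1 / 2 : ℝ) • (M + Mᵀ))

/-- A matrix acting on Euclidean space. -/
noncomputable def mulVecE {n : ℕ} (M : Matrix (Fin n) (Fin n) ℝ)
    (v : EuclideanSpace ℝ (Fin n)) : EuclideanSpace ℝ (Fin n) :=
  Matrix.toEuclideanCLM (𝕜 := ℝ) M v

/-- Operator norm of a matrix induced by the Euclidean vector norm. -/
noncomputable def opNorm {n : ℕ} (M : Matrix (Fin n) (Fin n) ℝ) : ℝ :=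
  ‖Matrix.toEuclideanCLM (𝕜 := ℝ) M‖

lemma lamMin_mul_le {n : ℕ} (M : Matrix (Fin n) (Fin n) ℝ) (h : M.IsHermitian)
    (v : Fin n → ℝ) : lamMin M * (v ⬝ᵥ v) ≤ v ⬝ᵥ (M *ᵥ v) := by
  rcases Nat.eq_zero_or_pos n with hn | hn
  · subst hn
    simp [dotProduct]
  haveI : NeZero n := ⟨hn.ne'⟩
  set U : Matrix (Fin n) (Fin n) ℝ := (h.eigenvectorUnitary : Matrix (Fin n) (Fin n) ℝ) with hU
  set w : Fin n → ℝ := v ᵥ* U with hw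
  have hstar : star U *ᵥ v = w := by
    funext i
    simp [hw, mulVec, vecMul, dotProduct, Matrix.star_apply, mul_comm]
  have hUU : U * star U = 1 := mem_unitaryGroup_iff.mp h.eigenvectorUnitary.2
  have hvv : w ⬝ᵥ w = v ⬝ᵥ v := by
    nth_rewrite 2 [← hstar]
    rw [hw, ← dotProduct_mulVec, mulVec_mulVec, hUU, one_mulVec]
  have hMv : v ⬝ᵥ (M *ᵥ v) = ∑ i, w i * (h.eigenvalues i * w i) := by
    conv_lhs => rw [h.spectral_theorem, Unitary.conjStarAlgAut_apply]
    rw [← mulVec_mulVec, ← mulVec_mulVec, dotProduct_mulVec, hstar, ← hw]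
    simp [dotProduct, mulVec_diagonal, Function.comp]
  have heigs : eigs M = h.eigenvalues := by rw [eigs, dif_pos h]
  have hle : ∀ i, lamMin M ≤ h.eigenvalues i := by
    intro i
    rw [← heigs]
    exact ciInf_le (Set.finite_range _).bddBelow i
  rw [← hvv, hMv, dotProduct, Finset.mul_sum]
  apply Finset.sum_le_sum
  intro i _
  nlinarith [mul_le_mul_of_nonneg_right (hle i) (mul_self_nonneg (w i))]

lemma norm_sq_eq_dot {n : ℕ} (v : EuclideanSpace ℝ (Fin n)) :
    ‖v‖ ^ 2 = (v : Fin n → ℝ) ⬝ᵥ (v : Fin n → ℝ) := by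
  rw [← real_inner_self_eq_norm_sq]
  simp [PiLp.inner_apply, dotProduct, mul_comm]
  rw [EuclideanSpace.norm_eq, Real.sq_sqrt (Finset.sum_nonneg fun i _ => sq_nonneg _)]
  simp [sq]

/-- sufficiency direction of Theorem 2: a C¹ symmetric positive-definite
`P` on `[τ-ε, τ)` with `Ṗ + AᵀP + PA ≤ 0` and `λ_min(P(t)) → +∞` forces every solution
of `x' = A(t) x` to satisfy `‖x t‖ → 0` as `t → τ⁻`. -/
theorem stmt9 {n : ℕ} (τ ε : ℝ) (hτ : 0 < τ) (hε : 0 < ε) (hετ : ε < τ)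
    (A : ℝ → Matrix (Fin n) (Fin n) ℝ) (hA : ContinuousOn A (Set.Ico 0 τ))
    (P P' : ℝ → Matrix (Fin n) (Fin n) ℝ)
    (hPsymm : ∀ t ∈ Set.Ico (τ - ε) τ, (P t).IsHermitian)
    (hPpos : ∀ t ∈ Set.Ico (τ - ε) τ, ∀ v : Fin n → ℝ, v ≠ 0 → 0 < v ⬝ᵥ (P t *ᵥ v))
    (hPderiv : ∀ t ∈ Set.Ico (τ - ε) τ, ∀ i j, HasDerivAt (fun s => P s i j) (P' t i j) t)
    (hP'cont : ContinuousOn P' (Set.Ico (τ - ε) τ))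
    (hLyap : ∀ t ∈ Set.Ico (τ - ε) τ, ∀ v : Fin n → ℝ,
      v ⬝ᵥ ((P' t + (A t)ᵀ * P t + P t * A t) *ᵥ v) ≤ 0)
    (hmin : Tendsto (fun t => lamMin (P t)) (𝓝[<] τ) atTop)
    (x : ℝ → EuclideanSpace ℝ (Fin n))
    (hx : ∀ t ∈ Set.Ico (0 : ℝ) τ, HasDerivAt x (mulVecE (A t) (x t)) t) :
    Tendsto (fun t => ‖x t‖) (𝓝[<] τ) (𝓝 0) := by
  set t₀ := τ - ε with ht₀def
  have ht₀pos : 0 < t₀ := by simp [ht₀def]; linarith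
  have ht₀mem : t₀ ∈ Set.Ico t₀ τ := ⟨le_refl _, by simp [ht₀def]; linarith⟩
  have hsub : Set.Ico t₀ τ ⊆ Set.Ico (0:ℝ) τ := fun s hs => ⟨le_trans ht₀pos.le hs.1, hs.2⟩
  -- the Lyapunov function
  set V : ℝ → ℝ := fun t => (x t : Fin n → ℝ) ⬝ᵥ (P t *ᵥ (x t : Fin n → ℝ)) with hVdef
  -- component derivatives
  have hxc : ∀ t ∈ Set.Ico t₀ τ, ∀ i, HasDerivAt (fun s => x s i) ((A t *ᵥ (x t : Fin n → ℝ)) i) t := by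
    intro t ht i
    exact ((EuclideanSpace.proj i).hasFDerivAt.comp_hasDerivAt t (hx t (hsub ht)) : )
  -- derivative of V
  have hVderiv : ∀ t ∈ Set.Ico t₀ τ, HasDerivAt V
      ((x t : Fin n → ℝ) ⬝ᵥ ((P' t + (A t)ᵀ * P t + P t * A t) *ᵥ (x t : Fin n → ℝ))) t := by
    intro t ht
    set v : Fin n → ℝ := (x t : Fin n → ℝ) with hv
    set y : Fin n → ℝ := A t *ᵥ v with hy
    have h1 : HasDerivAt V
        (∑ i, ∑ j, (y i * (P t i j * v j) + v i * (P' t i j * v j + P t i j * y j))) t := by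
      have : V = fun s => ∑ i, ∑ j, x s i * (P s i j * x s j) := by
        funext s
        simp [hVdef, dotProduct, mulVec, Finset.mul_sum]
      rw [this]
      apply HasDerivAt.fun_sum
      intro i _
      apply HasDerivAt.fun_sum
      intro j _
      exact (hxc t ht i).mul ((hPderiv t ht i j).mul (hxc t ht j))
    convert h1 using 1
    rw [Matrix.add_mulVec, Matrix.add_mulVec, dotProduct_add, dotProduct_add,
      ← Matrix.mulVec_mulVec, ← Matrix.mulVec_mulVec, dotProduct_mulVec v (A t)ᵀ,
      vecMul_transpose, ← hy]
    simp only [dotProduct, mulVec, Finset.mul_sum, ← Finset.sum_add_distrib]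
    apply Finset.sum_congr rfl
    intro i _
    apply Finset.sum_congr rfl
    intro j _
    ring
  -- V is antitone
  have hVanti : AntitoneOn V (Set.Ico t₀ τ) := by
    apply antitoneOn_of_deriv_nonpos (convex_Ico _ _)
    · exact fun s hs => (hVderiv s hs).continuousAt.continuousWithinAt
    · intro s hs
      rw [interior_Ico] at hs
      exact (hVderiv s (Set.mem_Ico_of_Ioo hs)).differentiableAt.differentiableWithinAt
    · intro s hs
      rw [interior_Ico] at hs
      rw [(hVderiv s (Set.mem_Ico_of_Ioo hs)).deriv]
      exact hLyap s (Set.mem_Ico_of_Ioo hs) _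
  set C := V t₀ with hC
  have hVle : ∀ t ∈ Set.Ico t₀ τ, V t ≤ C := fun t ht => hVanti ht₀mem ht ht.1
  have key : ∀ t ∈ Set.Ico t₀ τ, lamMin (P t) * ‖x t‖ ^ 2 ≤ C := by
    intro t ht
    rw [norm_sq_eq_dot]
    exact le_trans (lamMin_mul_le _ (hPsymm t ht) _) (hVle t ht)
  -- eventual bound
  have hev : ∀ᶠ t in 𝓝[<] τ, t ∈ Set.Ico t₀ τ := by
    have : Set.Ioo t₀ τ ∈ 𝓝[<] τ := Ioo_mem_nhdsLT_of_mem ⟨by linarith [ht₀mem.2], le_refl τ⟩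
    filter_upwards [this] with t ht
    exact Set.mem_Ico_of_Ioo ht
  have hev1 : ∀ᶠ t in 𝓝[<] τ, (1:ℝ) ≤ lamMin (P t) := hmin.eventually_ge_atTop 1
  have hsq : Tendsto (fun t => ‖x t‖ ^ 2) (𝓝[<] τ) (𝓝 0) := by
    apply squeeze_zero' (g := fun t => C / lamMin (P t))
    · filter_upwards with t using sq_nonneg _
    · filter_upwards [hev, hev1] with t ht h1
      rw [le_div_iff₀ (by linarith : (0:ℝ) < lamMin (P t)), mul_comm]
      exact key t ht
    · exact Tendsto.div_atTop tendsto_const_nhds hmin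
  have := (Real.continuous_sqrt.tendsto 0).comp hsq
  rw [Real.sqrt_zero] at this
  have heq : (fun t => ‖x t‖) = (fun s : ℝ => Real.sqrt s) ∘ fun t => ‖x t‖ ^ 2 := by
    funext t
    exact (Real.sqrt_sq (norm_nonneg _)).symm
  rw [heq]
  exact this
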